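/- Let h, q : ℝⁿ → ℝ be twice continuously differentiable with q convex and −ℓ I ⪯ ∇²h + ∇²q ⪯ ℓ I for some ℓ > 0, let P be proper closed, β ∈ (0, 1/ℓ), and let {xᵗ} satisfy xᵗ⁺¹ ∈ Argmin_x { ⟨∇h(xᵗ), x − xᵗ⟩ + (1/(2β))‖x − xᵗ‖² + P(x) } with h(x⁰) + P(x⁰) < ∞. If h + P is bounded below, then Σ_t ‖xᵗ⁺¹ − xᵗ‖² < ∞, and in particular ‖xᵗ⁺¹ − xᵗ‖ → 0. -/

import Mathlib

open scoped RealInnerProductSpace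

lemma aux_mono_deriv_nonneg {G : ℝ → ℝ} (hm : Monotone G) {c : ℝ} (hd : HasDerivAt G c 0) :
    0 ≤ c := by
  have h1 : Filter.Tendsto (slope G 0) (nhdsWithin 0 (Set.Ioi 0)) (nhds c) :=
    (hasDerivAt_iff_tendsto_slope.1 hd).mono_left
      (nhdsWithin_mono 0 (fun y hy => ne_of_gt hy))
  refine ge_of_tendsto h1 ?_
  filter_upwards [self_mem_nhdsWithin] with t ht
  rw [slope_def_field]
  exact div_nonneg (by linarith [hm (le_of_lt ht)]) (by simpa using le_of_lt ht)

variable {n : ℕ}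

lemma line_hasDerivAt (a d : EuclideanSpace ℝ (Fin n)) (s : ℝ) :
    HasDerivAt (fun s : ℝ => a + s • d) d s := by
  simpa using ((hasDerivAt_id s).smul_const d).const_add a

lemma comp_grad_hasDerivAt {f : EuclideanSpace ℝ (Fin n) → ℝ}
    {gradf : EuclideanSpace ℝ (Fin n) → EuclideanSpace ℝ (Fin n)}
    (hgf : ∀ x, HasGradientAt f (gradf x) x) (a d : EuclideanSpace ℝ (Fin n)) (s : ℝ) :
    HasDerivAt (fun s : ℝ => f (a + s • d)) (⟪gradf (a + s • d), d⟫) s := by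
  have := (hgf (a + s • d)).hasFDerivAt.comp_hasDerivAt s (line_hasDerivAt a d s)
  simpa [InnerProductSpace.toDual_apply_apply, Function.comp_def] using this

lemma hq_psd {q : EuclideanSpace ℝ (Fin n) → ℝ}
    {gradq : EuclideanSpace ℝ (Fin n) → EuclideanSpace ℝ (Fin n)}
    {Hq : EuclideanSpace ℝ (Fin n) → (EuclideanSpace ℝ (Fin n) →L[ℝ] EuclideanSpace ℝ (Fin n))}
    (hgradq : ∀ x, HasGradientAt q (gradq x) x)
    (hHq : ∀ x, HasFDerivAt gradq (Hq x) x)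
    (hqconv : ConvexOn ℝ Set.univ q) (z d : EuclideanSpace ℝ (Fin n)) :
    0 ≤ ⟪d, (Hq z) d⟫ := by
  set ψ : ℝ → ℝ := fun s => q (z + s • d) with hψ
  have hψd : ∀ s : ℝ, HasDerivAt ψ (⟪gradq (z + s • d), d⟫) s :=
    fun s => comp_grad_hasDerivAt hgradq z d s
  -- ψ is convex
  have hψconv : ConvexOn ℝ Set.univ ψ := by
    refine ⟨convex_univ, ?_⟩
    intro s _ t _ a b ha hb hab
    have h1 : a • z + b • z = z := by rw [← add_smul, hab, one_smul]
    have key : a • (z + s • d) + b • (z + t • d) = z + (a * s + b * t) • d := by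
      calc a • (z + s • d) + b • (z + t • d)
          = (a • z + b • z) + ((a * s) • d + (b * t) • d) := by
            simp only [smul_add, smul_smul]; abel
        _ = z + (a * s + b * t) • d := by rw [h1, add_smul]
    simpa [ψ, ← key] using
      hqconv.2 (Set.mem_univ (z + s • d)) (Set.mem_univ (z + t • d)) ha hb hab
  -- deriv ψ is monotone
  have hderiv : deriv ψ = fun s => ⟪gradq (z + s • d), d⟫ := funext fun s => (hψd s).deriv
  have hmono : Monotone (fun s : ℝ => ⟪gradq (z + s • d), d⟫) := by
    rw [← hderiv]
    have hM := hψconv.monotoneOn_deriv (fun s _ => (hψd s).differentiableAt)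
    exact fun a b hab => hM (Set.mem_univ a) (Set.mem_univ b) hab
  -- derivative of the monotone function at 0
  have hgd : HasDerivAt (fun s : ℝ => gradq (z + s • d)) ((Hq (z + (0:ℝ) • d)) d) 0 :=
    (hHq (z + (0:ℝ) • d)).comp_hasDerivAt 0 (line_hasDerivAt z d 0)
  have hG : HasDerivAt (fun s : ℝ => ⟪gradq (z + s • d), d⟫)
      (⟪gradq (z + (0:ℝ) • d), 0⟫ + ⟪(Hq (z + (0:ℝ) • d)) d, d⟫) 0 :=
    HasDerivAt.inner ℝ hgd (hasDerivAt_const 0 d)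
  have h0 := aux_mono_deriv_nonneg hmono hG
  simp only [zero_smul, add_zero, inner_zero_right, zero_add] at h0
  rw [real_inner_comm]
  exact h0

lemma descent_lemma {h q : EuclideanSpace ℝ (Fin n) → ℝ}
    {gradh gradq : EuclideanSpace ℝ (Fin n) → EuclideanSpace ℝ (Fin n)}
    {Hh Hq : EuclideanSpace ℝ (Fin n) → (EuclideanSpace ℝ (Fin n) →L[ℝ] EuclideanSpace ℝ (Fin n))}
    {ℓ : ℝ}
    (hgradh : ∀ x, HasGradientAt h (gradh x) x)
    (hgradq : ∀ x, HasGradientAt q (gradq x) x)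
    (hHh : ∀ x, HasFDerivAt gradh (Hh x) x)
    (hHq : ∀ x, HasFDerivAt gradq (Hq x) x)
    (hqconv : ConvexOn ℝ Set.univ q)
    (hbd : ∀ x v, ⟪v, (Hh x) v + (Hq x) v⟫ ≤ ℓ * ‖v‖ ^ 2)
    (a b : EuclideanSpace ℝ (Fin n)) :
    h b ≤ h a + ⟪gradh a, b - a⟫ + ℓ / 2 * ‖b - a‖ ^ 2 := by
  set d := b - a with hd
  -- key pointwise Hessian bound
  have hHhbd : ∀ v : EuclideanSpace ℝ (Fin n), ⟪d, (Hh v) d⟫ ≤ ℓ * ‖d‖ ^ 2 := by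
    intro v
    have h1 := hbd v d
    have h2 := hq_psd hgradq hHq hqconv v d
    rw [inner_add_right] at h1
    linarith
  set F1 : ℝ → ℝ := fun s => ⟪gradh (a + s • d), d⟫ - ⟪gradh a, d⟫ - ℓ * s * ‖d‖ ^ 2 with hF1
  have hF1d : ∀ s : ℝ, HasDerivAt F1 (⟪(Hh (a + s • d)) d, d⟫ - ℓ * ‖d‖ ^ 2) s := by
    intro s
    have hgd : HasDerivAt (fun s : ℝ => gradh (a + s • d)) ((Hh (a + s • d)) d) s :=
      (hHh (a + s • d)).comp_hasDerivAt s (line_hasDerivAt a d s)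
    have hi : HasDerivAt (fun s : ℝ => ⟪gradh (a + s • d), d⟫)
        (⟪gradh (a + s • d), 0⟫ + ⟪(Hh (a + s • d)) d, d⟫) s :=
      HasDerivAt.inner ℝ hgd (hasDerivAt_const s d)
    simp only [inner_zero_right, zero_add] at hi
    have hpoly : HasDerivAt (fun s : ℝ => ⟪gradh a, d⟫ + ℓ * s * ‖d‖ ^ 2)
        (ℓ * ‖d‖ ^ 2) s := by
      have := ((hasDerivAt_id s).const_mul ℓ).mul_const (‖d‖ ^ 2)
      simpa using this.const_add (⟪gradh a, d⟫)
    have := hi.sub hpoly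
    simpa [hF1, sub_sub, Pi.sub_def] using this
  have hF1anti : Antitone F1 := by
    refine antitone_of_deriv_nonpos (fun s => (hF1d s).differentiableAt) (fun s => ?_)
    rw [(hF1d s).deriv]
    have := hHhbd (a + s • d)
    rw [real_inner_comm] at this
    linarith
  have hF1le : ∀ s : ℝ, 0 ≤ s → F1 s ≤ 0 := by
    intro s hs
    have := hF1anti hs
    simpa [hF1] using this
  set F : ℝ → ℝ := fun s => h (a + s • d) - s * ⟪gradh a, d⟫ - ℓ / 2 * s ^ 2 * ‖d‖ ^ 2 with hF
  have hFd : ∀ s : ℝ, HasDerivAt F (F1 s) s := by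
    intro s
    have h1 := comp_grad_hasDerivAt hgradh a d s
    have h2 : HasDerivAt (fun s : ℝ => s * ⟪gradh a, d⟫) (⟪gradh a, d⟫) s := by
      simpa using (hasDerivAt_id s).mul_const (⟪gradh a, d⟫)
    have h3 : HasDerivAt (fun s : ℝ => ℓ / 2 * s ^ 2 * ‖d‖ ^ 2)
        (ℓ * s * ‖d‖ ^ 2) s := by
      have := ((hasDerivAt_pow 2 s).const_mul (ℓ / 2)).mul_const (‖d‖ ^ 2)
      refine this.congr_deriv ?_
      ring
    have := (h1.sub h2).sub h3
    simpa [hF, hF1, sub_sub, Pi.sub_def, Pi.add_def] using this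
  have hFanti : AntitoneOn F (Set.Icc 0 1) := by
    refine antitoneOn_of_deriv_nonpos (convex_Icc 0 1)
      (fun s _ => ((hFd s).differentiableAt).continuousAt.continuousWithinAt)
      (fun s hs => ((hFd s).differentiableAt).differentiableWithinAt) (fun s hs => ?_)
    rw [interior_Icc] at hs
    rw [(hFd s).deriv]
    exact hF1le s (le_of_lt hs.1)
  have hle := hFanti (Set.mem_Icc.2 ⟨le_refl 0, zero_le_one⟩)
    (Set.mem_Icc.2 ⟨zero_le_one, le_refl 1⟩) zero_le_one
  simp only [hF] at hle
  have hab : a + (1:ℝ) • d = b := by rw [hd]; simp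
  have ha0 : a + (0:ℝ) • d = a := by simp
  rw [hab, ha0] at hle
  norm_num at hle ⊢
  linarith


/-- For the proximal gradient iterates under the flexible step-size rule, if `h + P`
is bounded below then the successive squared changes are summable, and in particular
`‖xᵗ⁺¹ − xᵗ‖ → 0`. -/
theorem prox_grad_successive_sq_summable {n : ℕ}
    (h q : EuclideanSpace ℝ (Fin n) → ℝ)
    (gradh gradq : EuclideanSpace ℝ (Fin n) → EuclideanSpace ℝ (Fin n))
    (Hh Hq : EuclideanSpace ℝ (Fin n) → (EuclideanSpace ℝ (Fin n) →L[ℝ] EuclideanSpace ℝ (Fin n)))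
    (P : EuclideanSpace ℝ (Fin n) → EReal)
    (ℓ β : ℝ) (hℓ : 0 < ℓ) (hβ : β ∈ Set.Ioo (0 : ℝ) (1 / ℓ))
    (hgradh : ∀ x, HasGradientAt h (gradh x) x)
    (hgradq : ∀ x, HasGradientAt q (gradq x) x)
    (hHh : ∀ x, HasFDerivAt gradh (Hh x) x) (hHhc : Continuous Hh)
    (hHq : ∀ x, HasFDerivAt gradq (Hq x) x) (hHqc : Continuous Hq)
    (hqconv : ConvexOn ℝ Set.univ q)
    (hbd : ∀ x v, -ℓ * ‖v‖ ^ 2 ≤ ⟪v, (Hh x) v + (Hq x) v⟫ ∧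
      ⟪v, (Hh x) v + (Hq x) v⟫ ≤ ℓ * ‖v‖ ^ 2)
    (hProper : ∃ y, P y ≠ ⊤) (hNoBot : ∀ y, P y ≠ ⊥) (hlsc : LowerSemicontinuous P)
    (x : ℕ → EuclideanSpace ℝ (Fin n))
    (hx0 : P (x 0) ≠ ⊤)
    (hiter : ∀ t, ∀ y,
      ((⟪gradh (x t), x (t + 1) - x t⟫ + (1 / (2 * β)) * ‖x (t + 1) - x t‖ ^ 2 : ℝ) : EReal)
          + P (x (t + 1)) ≤
        ((⟪gradh (x t), y - x t⟫ + (1 / (2 * β)) * ‖y - x t‖ ^ 2 : ℝ) : EReal) + P y)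
    (hbelow : ∃ m : ℝ, ∀ y, ((m : ℝ) : EReal) ≤ ((h y : ℝ) : EReal) + P y) :
    Summable (fun t => ‖x (t + 1) - x t‖ ^ 2) ∧
      Filter.Tendsto (fun t => ‖x (t + 1) - x t‖) Filter.atTop (nhds 0) := by

  obtain ⟨m, hm⟩ := hbelow
  obtain ⟨hβ0, hβ1⟩ := hβ
  -- specialize the iterate inequality at y = x t
  have hiter' : ∀ t,
      ((⟪gradh (x t), x (t + 1) - x t⟫ + (1 / (2 * β)) * ‖x (t + 1) - x t‖ ^ 2 : ℝ) : EReal)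
        + P (x (t + 1)) ≤ P (x t) := by
    intro t
    have := hiter t (x t)
    simpa using this
  -- all P (x t) are finite
  have hfin : ∀ t, P (x t) ≠ ⊤ := by
    intro t
    induction t with
    | zero => exact hx0
    | succ t ih =>
      intro htop
      have H := hiter' t
      rw [htop] at H
      rw [EReal.add_top_of_ne_bot (EReal.coe_ne_bot _)] at H
      exact ih (top_le_iff.1 H)
  -- real-valued version
  set p : ℕ → ℝ := fun t => (P (x t)).toReal with hp
  have hPcoe : ∀ t, P (x t) = ((p t : ℝ) : EReal) := fun t =>
    (EReal.coe_toReal (hfin t) (hNoBot _)).symm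
  have hre : ∀ t, ⟪gradh (x t), x (t + 1) - x t⟫ + (1 / (2 * β)) * ‖x (t + 1) - x t‖ ^ 2
      + p (t + 1) ≤ p t := by
    intro t
    have H := hiter' t
    rw [hPcoe t, hPcoe (t + 1), ← EReal.coe_add] at H
    exact_mod_cast H
  -- descent lemma
  have hdesc : ∀ t, h (x (t + 1)) ≤ h (x t) + ⟪gradh (x t), x (t + 1) - x t⟫
      + ℓ / 2 * ‖x (t + 1) - x t‖ ^ 2 :=
    fun t => descent_lemma hgradh hgradq hHh hHq hqconv (fun v w => (hbd v w).2) (x t) (x (t + 1))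
  set Φ : ℕ → ℝ := fun t => h (x t) + p t with hΦ
  have hc : 0 < 1 / (2 * β) - ℓ / 2 := by
    have h1 : ℓ * β < 1 := by
      have := (lt_div_iff₀ hℓ).1 hβ1
      linarith
    have h2 : ℓ / 2 < 1 / (2 * β) := by
      rw [div_lt_div_iff₀ two_pos (by linarith : (0:ℝ) < 2 * β)]
      nlinarith
    linarith
  set c : ℝ := 1 / (2 * β) - ℓ / 2 with hcdef
  have hstep : ∀ t, Φ (t + 1) + c * ‖x (t + 1) - x t‖ ^ 2 ≤ Φ t := by
    intro t
    have h1 := hre t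
    have h2 := hdesc t
    simp only [hΦ, hcdef]
    nlinarith [sq_nonneg (‖x (t + 1) - x t‖)]
  have hlow : ∀ t, m ≤ Φ t := by
    intro t
    have := hm (x t)
    rw [hPcoe t, ← EReal.coe_add] at this
    exact_mod_cast this
  -- partial sums bounded
  have hsum : ∀ N, ∑ t ∈ Finset.range N, c * ‖x (t + 1) - x t‖ ^ 2 ≤ Φ 0 - Φ N := by
    intro N
    induction N with
    | zero => simp
    | succ N ih =>
      rw [Finset.sum_range_succ]
      have := hstep N
      linarith
  have hbound : ∀ N, ∑ t ∈ Finset.range N, ‖x (t + 1) - x t‖ ^ 2 ≤ (Φ 0 - m) / c := by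
    intro N
    have h1 := hsum N
    have h2 := hlow N
    rw [← Finset.mul_sum] at h1
    rw [le_div_iff₀ hc]
    nlinarith
  have hsummable : Summable (fun t => ‖x (t + 1) - x t‖ ^ 2) :=
    summable_of_sum_range_le (fun t => by positivity) hbound
  refine ⟨hsummable, ?_⟩
  have h0 := hsummable.tendsto_atTop_zero
  have := (Real.continuous_sqrt.tendsto 0).comp h0
  simp only [Real.sqrt_zero] at this
  convert this using 2 with t
  simp [Function.comp, Real.sqrt_sq (norm_nonneg _)]
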